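/- A linear operator T : H → Y from a Hilbert space H to a Banach space Y is bounded (continuous) if and only if T maps every orthonormal sequence of H onto a bounded sequence in Y. -/

import Mathlib

section Aux

variable {𝕜 H Y : Type*} [RCLike 𝕜] [NormedAddCommGroup H] [InnerProductSpace 𝕜 H]
  [CompleteSpace H] [NormedAddCommGroup Y] [NormedSpace 𝕜 Y]

/-- If `T` is not continuous, then on the orthogonal complement of any
finite-dimensional subspace there is a unit vector with `‖T x‖` as large as we like. -/
lemma key_aux (T : H →ₗ[𝕜] Y) (h : ¬Continuous T)
    (F : Submodule 𝕜 H) (hF : FiniteDimensional 𝕜 F) (C : ℝ) :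
    ∃ x, x ∈ Fᗮ ∧ ‖x‖ = 1 ∧ C ≤ ‖T x‖ := by
  by_contra hc
  push_neg at hc
  apply h
  haveI := hF
  haveI : CompleteSpace F := FiniteDimensional.complete 𝕜 F
  -- bound on Fᗮ
  set C' : ℝ := max C 0 with hC'
  have hC'0 : 0 ≤ C' := le_max_right _ _
  have horth : ∀ x ∈ Fᗮ, ‖T x‖ ≤ C' * ‖x‖ := by
    intro x hx
    rcases eq_or_ne x 0 with rfl | hx0
    · simp
    · have hxn : ‖x‖ ≠ 0 := norm_ne_zero_iff.mpr hx0
      have hmem : (↑‖x‖⁻¹ : 𝕜) • x ∈ Fᗮ := Submodule.smul_mem _ _ hx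
      have hnorm : ‖(↑‖x‖⁻¹ : 𝕜) • x‖ = 1 := by
        rw [norm_smul, RCLike.norm_ofReal, abs_inv, abs_norm]
        field_simp
      have := (hc _ hmem hnorm).le
      rw [map_smul, norm_smul, RCLike.norm_ofReal, abs_inv, abs_norm] at this
      have h1 : ‖T x‖ ≤ C * ‖x‖ := by
        rw [inv_mul_le_iff₀ (by positivity)] at this
        linarith [this]
      calc ‖T x‖ ≤ C * ‖x‖ := h1
        _ ≤ C' * ‖x‖ := by
            apply mul_le_mul_of_nonneg_right (le_max_left _ _) (norm_nonneg _)
  -- bound on F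
  set g : F →L[𝕜] Y := LinearMap.toContinuousLinearMap (T.comp F.subtype) with hg
  have hFbound : ∀ x : F, ‖T (x : H)‖ ≤ ‖g‖ * ‖x‖ := by
    intro x
    have := g.le_opNorm x
    simpa [hg] using this
  -- combine via orthogonal projection
  refine AddMonoidHomClass.continuous_of_bound T (‖g‖ + C') ?_
  intro x
  set p : F := F.orthogonalProjectionOnto x with hp
  have hsub : x - (p : H) ∈ Fᗮ := Submodule.sub_starProjection_mem_orthogonal (K := F) x
  have hdecomp : T x = T (p : H) + T (x - (p : H)) := by
    rw [← map_add]; congr 1; abel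
  have hpnorm : ‖p‖ ≤ ‖x‖ := by
    have h1 := (F.orthogonalProjectionOnto).le_opNorm x
    have h2 := Submodule.orthogonalProjectionOnto_norm_le F
    calc ‖p‖ ≤ ‖F.orthogonalProjectionOnto‖ * ‖x‖ := h1
      _ ≤ 1 * ‖x‖ := mul_le_mul_of_nonneg_right h2 (norm_nonneg _)
      _ = ‖x‖ := one_mul _
  have hsnorm : ‖x - (p : H)‖ ≤ ‖x‖ := by
    have hinner : (inner 𝕜 ((p : H)) (x - (p : H)) : 𝕜) = 0 :=
      (Submodule.mem_orthogonal _ _).1 hsub _ p.2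
    have hpyth := norm_add_sq_eq_norm_sq_add_norm_sq_of_inner_eq_zero
      ((p : H)) (x - (p : H)) hinner
    have hx : (p : H) + (x - (p : H)) = x := by abel
    rw [hx] at hpyth
    nlinarith [norm_nonneg (x - (p : H)), norm_nonneg x, norm_nonneg ((p : H))]
  calc ‖T x‖ = ‖T (p : H) + T (x - (p : H))‖ := by rw [hdecomp]
    _ ≤ ‖T (p : H)‖ + ‖T (x - (p : H))‖ := norm_add_le _ _
    _ ≤ ‖g‖ * ‖p‖ + C' * ‖x - (p : H)‖ := add_le_add (hFbound p) (horth _ hsub)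
    _ ≤ ‖g‖ * ‖x‖ + C' * ‖x‖ := add_le_add
        (mul_le_mul_of_nonneg_left hpnorm (norm_nonneg g))
        (mul_le_mul_of_nonneg_left hsnorm hC'0)
    _ = (‖g‖ + C') * ‖x‖ := by ring

/-- A recursively chosen orthonormal sequence on which `T` is unbounded. -/
noncomputable def badSeq (T : H →ₗ[𝕜] Y) (h : ¬Continuous T) : ℕ → H
  | n =>
    (key_aux T h (Submodule.span 𝕜 (Set.range fun k : Fin n => badSeq T h k))
      (FiniteDimensional.span_of_finite 𝕜 (Set.finite_range _)) n).choose
  termination_by n => n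
  decreasing_by all_goals exact k.isLt

lemma badSeq_spec (T : H →ₗ[𝕜] Y) (h : ¬Continuous T) (n : ℕ) :
    badSeq T h n ∈ (Submodule.span 𝕜 (Set.range fun k : Fin n => badSeq T h k))ᗮ ∧
      ‖badSeq T h n‖ = 1 ∧ (n : ℝ) ≤ ‖T (badSeq T h n)‖ := by
  rw [badSeq]
  exact (key_aux T h (Submodule.span 𝕜 (Set.range fun k : Fin n => badSeq T h k))
      (FiniteDimensional.span_of_finite 𝕜 (Set.finite_range _)) n).choose_spec

lemma badSeq_orthonormal (T : H →ₗ[𝕜] Y) (h : ¬Continuous T) :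
    Orthonormal 𝕜 (badSeq T h) := by
  constructor
  · intro n; exact (badSeq_spec T h n).2.1
  · have key : ∀ i j : ℕ, i < j → (inner 𝕜 (badSeq T h i) (badSeq T h j) : 𝕜) = 0 := by
      intro i j hij
      have hmem : badSeq T h i ∈
          Submodule.span 𝕜 (Set.range fun k : Fin j => badSeq T h k) := by
        apply Submodule.subset_span
        exact ⟨⟨i, hij⟩, rfl⟩
      exact (Submodule.mem_orthogonal _ _).1 (badSeq_spec T h j).1 _ hmem
    intro i j hij
    rcases lt_or_gt_of_ne hij with hlt | hgt
    · exact key i j hlt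
    · rw [← inner_conj_symm, key j i hgt, map_zero]

end Aux

theorem bounded_iff_bounded_on_orthonormal_sequences
    {𝕜 H Y : Type*} [RCLike 𝕜] [NormedAddCommGroup H] [InnerProductSpace 𝕜 H]
    [CompleteSpace H] [NormedAddCommGroup Y] [NormedSpace 𝕜 Y] [CompleteSpace Y]
    (T : H →ₗ[𝕜] Y) :
    Continuous T ↔
      ∀ u : ℕ → H, Orthonormal 𝕜 u → ∃ M : ℝ, ∀ n : ℕ, ‖T (u n)‖ ≤ M := by
  constructor
  · intro hT u hu
    set T' : H →L[𝕜] Y := ⟨T, hT⟩ with hT'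
    refine ⟨‖T'‖, fun n => ?_⟩
    have := T'.le_opNorm (u n)
    rw [hu.1 n] at this
    exact (by simpa using this : ‖T' (u n)‖ ≤ ‖T'‖)
  · intro hbound
    by_contra h
    obtain ⟨M, hM⟩ := hbound (badSeq T h) (badSeq_orthonormal T h)
    obtain ⟨n, hn⟩ := exists_nat_gt M
    have h1 := (badSeq_spec T h n).2.2
    have h2 := hM n
    linarith
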